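/- Let λ, β, ξ, A_L, A_NL, α_L, α_NL be strictly positive real numbers. Define λ(φ) = (2·π·λ·A_NL/α_NL)·(A_NL·φ)^(2/α_NL − 1) + (2·π·λ·A_L/α_L)·(A_L·φ)^(2/α_L − 1)·exp(−β·(A_L·φ)^(1/α_L)) − (2·π·λ·A_NL/α_NL)·(A_NL·φ)^(2/α_NL − 1)·exp(−β·(A_NL·φ)^(1/α_NL)) for φ > 0, and define H_i = (A_i^(2/α_i)/α_i)·∫_0^∞ φ^(2/α_i)·exp(−β·(A_i·φ)^(1/α_i) − φ/ξ) dφ for i ∈ {L, NL}. Then ∫_0^∞ λ(φ)·(φ/ξ²)·exp(−φ/ξ) dφ = (2·π·λ·A_NL^(2/α_NL)/α_NL)·ξ^(2/α_NL − 1)·Γ(2/α_NL + 1) + (2·π·λ/ξ²)·(H_L − H_NL), where Γ denotes the real Gamma function. -/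

import Mathlib

open Real MeasureTheory Set

lemma aux_int (c ξ : ℝ) (hc : 0 < c) (hξ : 0 < ξ) :
    IntegrableOn (fun x : ℝ => x ^ c * Real.exp (-(x / ξ))) (Set.Ioi 0) := by
  have h := integrableOn_rpow_mul_exp_neg_mul_rpow (p := 1) (s := c) (b := 1/ξ)
    (by linarith) one_pos (by positivity)
  refine h.congr_fun (fun x hx => ?_) measurableSet_Ioi
  beta_reduce
  rw [Real.rpow_one, show -(1/ξ) * x = -(x/ξ) by ring]

lemma aux_val (c ξ : ℝ) (hc : 0 < c) (hξ : 0 < ξ) :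
    ∫ x in Set.Ioi (0:ℝ), x ^ c * Real.exp (-(x / ξ)) = ξ ^ (c + 1) * Real.Gamma (c + 1) := by
  have h := Real.integral_rpow_mul_exp_neg_mul_Ioi (a := c + 1) (r := 1/ξ) (by linarith)
    (by positivity)
  rw [show ∫ x in Set.Ioi (0:ℝ), x ^ c * Real.exp (-(x / ξ))
      = ∫ t in Set.Ioi (0:ℝ), t ^ (c + 1 - 1) * Real.exp (-(1/ξ * t)) from
    setIntegral_congr_fun measurableSet_Ioi (fun t ht => by
      rw [add_sub_cancel_right, show -(1/ξ * t) = -(t/ξ) by ring]), h, one_div_one_div]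

lemma aux_int2 (c β A α ξ : ℝ) (hc : 0 < c) (hβ : 0 < β) (hA : 0 < A) (hα : 0 < α)
    (hξ : 0 < ξ) :
    IntegrableOn (fun x : ℝ => x ^ c * Real.exp (-(β * (A * x) ^ (1/α)) - x / ξ))
      (Set.Ioi 0) := by
  refine Integrable.mono' (aux_int c ξ hc hξ) ?_ ?_
  · apply Measurable.aestronglyMeasurable
    fun_prop
  · filter_upwards [self_mem_ae_restrict measurableSet_Ioi] with x hx
    have hx0 : (0:ℝ) < x := hx
    rw [Real.norm_eq_abs, abs_of_nonneg (by positivity)]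
    refine mul_le_mul_of_nonneg_left (Real.exp_le_exp.mpr ?_) (Real.rpow_nonneg hx0.le c)
    have : 0 ≤ β * (A * x) ^ (1/α) := by positivity
    linarith

theorem stmt_13 (lam β ξ A_L A_NL α_L α_NL : ℝ)
    (hlam : 0 < lam) (hβ : 0 < β) (hξ : 0 < ξ)
    (hAL : 0 < A_L) (hANL : 0 < A_NL) (hαL : 0 < α_L) (hαNL : 0 < α_NL)
    (dens : ℝ → ℝ)
    (hdens : ∀ φ > (0 : ℝ), dens φ =
      2 * π * lam * A_NL / α_NL * (A_NL * φ) ^ (2 / α_NL - 1) +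
        2 * π * lam * A_L / α_L * (A_L * φ) ^ (2 / α_L - 1) *
          Real.exp (-(β * (A_L * φ) ^ (1 / α_L))) -
        2 * π * lam * A_NL / α_NL * (A_NL * φ) ^ (2 / α_NL - 1) *
          Real.exp (-(β * (A_NL * φ) ^ (1 / α_NL))))
    (H_L H_NL : ℝ)
    (hHL : H_L = A_L ^ (2 / α_L) / α_L *
      ∫ φ in Set.Ioi (0 : ℝ), φ ^ (2 / α_L) *
        Real.exp (-(β * (A_L * φ) ^ (1 / α_L)) - φ / ξ))
    (hHNL : H_NL = A_NL ^ (2 / α_NL) / α_NL *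
      ∫ φ in Set.Ioi (0 : ℝ), φ ^ (2 / α_NL) *
        Real.exp (-(β * (A_NL * φ) ^ (1 / α_NL)) - φ / ξ)) :
    ∫ φ in Set.Ioi (0 : ℝ), dens φ * (φ / ξ ^ 2) * Real.exp (-(φ / ξ)) =
      2 * π * lam * A_NL ^ (2 / α_NL) / α_NL * ξ ^ (2 / α_NL - 1) *
          Real.Gamma (2 / α_NL + 1) +
        2 * π * lam / ξ ^ 2 * (H_L - H_NL) := by
  have hpL : (0:ℝ) < 2 / α_L := by positivity
  have hpNL : (0:ℝ) < 2 / α_NL := by positivity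
  have hI1 := aux_int (2 / α_NL) ξ hpNL hξ
  have hI2 := aux_int2 (2 / α_L) β A_L α_L ξ hpL hβ hAL hαL hξ
  have hI3 := aux_int2 (2 / α_NL) β A_NL α_NL ξ hpNL hβ hANL hαNL hξ
  have key : Set.EqOn (fun φ => dens φ * (φ / ξ ^ 2) * Real.exp (-(φ / ξ)))
      (fun φ => ((2 * π * lam * A_NL ^ (2 / α_NL) / (α_NL * ξ ^ 2)) *
          (φ ^ (2 / α_NL) * Real.exp (-(φ / ξ))) +
        (2 * π * lam * A_L ^ (2 / α_L) / (α_L * ξ ^ 2)) *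
          (φ ^ (2 / α_L) * Real.exp (-(β * (A_L * φ) ^ (1 / α_L)) - φ / ξ))) -
        (2 * π * lam * A_NL ^ (2 / α_NL) / (α_NL * ξ ^ 2)) *
          (φ ^ (2 / α_NL) * Real.exp (-(β * (A_NL * φ) ^ (1 / α_NL)) - φ / ξ)))
      (Set.Ioi 0) := by
    intro φ hφ
    have hφ0 : (0:ℝ) < φ := hφ
    have hφNL : φ ^ (2 / α_NL) = φ ^ (2 / α_NL - 1) * φ := by
      rw [← Real.rpow_add_one hφ0.ne']; congr 1 <;> ring
    have hφL : φ ^ (2 / α_L) = φ ^ (2 / α_L - 1) * φ := by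
      rw [← Real.rpow_add_one hφ0.ne']; congr 1 <;> ring
    have hANL' : A_NL ^ (2 / α_NL) = A_NL ^ (2 / α_NL - 1) * A_NL := by
      rw [← Real.rpow_add_one hANL.ne']; congr 1 <;> ring
    have hAL' : A_L ^ (2 / α_L) = A_L ^ (2 / α_L - 1) * A_L := by
      rw [← Real.rpow_add_one hAL.ne']; congr 1 <;> ring
    have heL : Real.exp (-(β * (A_L * φ) ^ (1 / α_L)) - φ / ξ) =
        Real.exp (-(β * (A_L * φ) ^ (1 / α_L))) * Real.exp (-(φ / ξ)) := by
      rw [← Real.exp_add]; congr 1 <;> ring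
    have heNL : Real.exp (-(β * (A_NL * φ) ^ (1 / α_NL)) - φ / ξ) =
        Real.exp (-(β * (A_NL * φ) ^ (1 / α_NL))) * Real.exp (-(φ / ξ)) := by
      rw [← Real.exp_add]; congr 1 <;> ring
    simp only [hdens φ hφ0, heL, heNL]
    simp only [Real.mul_rpow hANL.le hφ0.le, Real.mul_rpow hAL.le hφ0.le,
      hφNL, hφL, hANL', hAL']
    field_simp
  set c1 := 2 * π * lam * A_NL ^ (2 / α_NL) / (α_NL * ξ ^ 2) with hc1
  set c2 := 2 * π * lam * A_L ^ (2 / α_L) / (α_L * ξ ^ 2) with hc2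
  have hF : Integrable (fun x : ℝ =>
      c1 * (x ^ (2 / α_NL) * Real.exp (-(x / ξ))) +
      c2 * (x ^ (2 / α_L) * Real.exp (-(β * (A_L * x) ^ (1 / α_L)) - x / ξ)))
      (volume.restrict (Set.Ioi 0)) := (hI1.const_mul c1).add (hI2.const_mul c2)
  rw [setIntegral_congr_fun measurableSet_Ioi key,
    integral_sub hF (hI3.const_mul c1),
    integral_add (hI1.const_mul c1) (hI2.const_mul c2),
    integral_const_mul, integral_const_mul, integral_const_mul,
    aux_val (2 / α_NL) ξ hpNL hξ, hHL, hHNL]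
  have hxi : ξ ^ (2 / α_NL + 1) = ξ ^ (2 / α_NL - 1) * ξ ^ 2 := by
    rw [← Real.rpow_natCast ξ 2, ← Real.rpow_add hξ]; congr 1 <;> (push_cast; ring)
  rw [hxi]
  set I2 := ∫ φ in Set.Ioi (0:ℝ), φ ^ (2 / α_L) *
      Real.exp (-(β * (A_L * φ) ^ (1 / α_L)) - φ / ξ) with hI2d
  set I3 := ∫ φ in Set.Ioi (0:ℝ), φ ^ (2 / α_NL) *
      Real.exp (-(β * (A_NL * φ) ^ (1 / α_NL)) - φ / ξ) with hI3d
  set G := Real.Gamma (2 / α_NL + 1) with hG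
  set u := ξ ^ (2 / α_NL - 1) with hu
  set v := A_NL ^ (2 / α_NL) with hv
  set w := A_L ^ (2 / α_L) with hw
  rw [hc1, hc2]
  field_simp
  ring
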